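/- Every monotonically normal space is monotonically Σ-normal (mΣn). -/

import Mathlib

def IsRegGDelta {X : Type*} [TopologicalSpace X] (D : Set X) : Prop :=
  ∃ U : ℕ → Set X, (∀ n, IsOpen (U n)) ∧ (∀ n, D ⊆ U n) ∧ D = ⋂ n, closure (U n)

def MonNormalOp (X : Type*) [TopologicalSpace X] : Prop :=
  ∃ H : Set X → Set X → Set X,
    (∀ C D, IsClosed C → IsClosed D → Disjoint C D →
      IsOpen (H C D) ∧ C ⊆ H C D ∧ closure (H C D) ⊆ Dᶜ) ∧
    (∀ C D C' D', IsClosed C → IsClosed D → Disjoint C D →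
      IsClosed C' → IsClosed D' → Disjoint C' D' →
      C ⊆ C' → D' ⊆ D → H C D ⊆ H C' D')

def MSigmaN (X : Type*) [TopologicalSpace X] : Prop :=
  ∃ W : Set X → Set X → Set X,
    (∀ C U, IsClosed C → IsOpen U → C ⊆ U →
      IsOpen (W C U) ∧ IsRegGDelta (W C U)ᶜ ∧ C ⊆ W C U ∧ W C U ⊆ U) ∧
    (∀ C U C' U', IsClosed C → IsOpen U → C ⊆ U → IsClosed C' → IsOpen U' → C' ⊆ U' →
      C ⊆ C' → U ⊆ U' → W C U ⊆ W C' U')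

/-- Iterated operator: `G H C U 0 = H C Uᶜ`, `G H C U (n+1) = H (closure (G n)) Uᶜ`. -/
def Gaux {X : Type*} [TopologicalSpace X] (H : Set X → Set X → Set X) (C U : Set X) :
    ℕ → Set X
  | 0 => H C Uᶜ
  | n + 1 => H (closure (Gaux H C U n)) Uᶜ

theorem stmt_12 {X : Type*} [TopologicalSpace X] (h : MonNormalOp X) : MSigmaN X := by
  obtain ⟨H, h1, h2⟩ := h
  -- Basic properties of the iterates, by induction.
  have key : ∀ (C U : Set X), IsClosed C → IsOpen U → C ⊆ U → ∀ n,
      IsOpen (Gaux H C U n) ∧ C ⊆ Gaux H C U n ∧ closure (Gaux H C U n) ⊆ U := by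
    intro C U hC hU hCU n
    induction n with
    | zero =>
        have hd : Disjoint C Uᶜ := Set.disjoint_compl_right_iff_subset.mpr hCU
        obtain ⟨ho, hs, hc⟩ := h1 C Uᶜ hC hU.isClosed_compl hd
        exact ⟨ho, hs, by simpa [Gaux] using hc⟩
    | succ n ih =>
        obtain ⟨ho, hs, hc⟩ := ih
        have hd : Disjoint (closure (Gaux H C U n)) Uᶜ :=
          Set.disjoint_compl_right_iff_subset.mpr hc
        obtain ⟨ho', hs', hc'⟩ := h1 _ Uᶜ isClosed_closure hU.isClosed_compl hd
        exact ⟨ho', hs.trans (subset_closure.trans hs'), by simpa [Gaux] using hc'⟩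
  -- closure of each iterate is in the next one.
  have step : ∀ (C U : Set X), IsClosed C → IsOpen U → C ⊆ U → ∀ n,
      closure (Gaux H C U n) ⊆ Gaux H C U (n + 1) := by
    intro C U hC hU hCU n
    have hc := (key C U hC hU hCU n).2.2
    have hd : Disjoint (closure (Gaux H C U n)) Uᶜ :=
      Set.disjoint_compl_right_iff_subset.mpr hc
    exact (h1 _ Uᶜ isClosed_closure hU.isClosed_compl hd).2.1
  refine ⟨fun C U => ⋃ n, Gaux H C U n, ?_, ?_⟩
  · intro C U hC hU hCU
    have hkey := key C U hC hU hCU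
    refine ⟨isOpen_iUnion fun n => (hkey n).1, ?_, ?_, ?_⟩
    · -- regular Gδ property of the complement
      refine ⟨fun n => (closure (Gaux H C U n))ᶜ, fun n => isClosed_closure.isOpen_compl,
        ?_, ?_⟩
      · intro n x hx
        have : Gaux H C U (n + 1) ⊆ ⋃ m, Gaux H C U m := Set.subset_iUnion _ (n + 1)
        intro hmem
        exact hx (this (step C U hC hU hCU n hmem))
      · apply Set.Subset.antisymm
        · intro x hx
          refine Set.mem_iInter.mpr fun n => subset_closure ?_
          intro hmem
          exact hx (Set.subset_iUnion _ (n + 1) (step C U hC hU hCU n hmem))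
        · intro x hx hxW
          obtain ⟨n, hn⟩ := Set.mem_iUnion.mp hxW
          have h1' : x ∈ closure ((closure (Gaux H C U n))ᶜ) :=
            Set.mem_iInter.mp hx n
          rw [closure_compl] at h1'
          exact h1' (interior_maximal subset_closure (hkey n).1 hn)
    · exact ((hkey 0).2.1).trans (Set.subset_iUnion _ 0)
    · exact Set.iUnion_subset fun n => (subset_closure.trans (hkey n).2.2)
  · intro C U C' U' hC hU hCU hC' hU' hCU' hCC' hUU'
    have mono : ∀ n, Gaux H C U n ⊆ Gaux H C' U' n := by
      intro n
      induction n with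
      | zero =>
          exact h2 C Uᶜ C' U'ᶜ hC hU.isClosed_compl
            (Set.disjoint_compl_right_iff_subset.mpr hCU) hC' hU'.isClosed_compl
            (Set.disjoint_compl_right_iff_subset.mpr hCU') hCC'
            (Set.compl_subset_compl.mpr hUU')
      | succ n ih =>
          exact h2 _ Uᶜ _ U'ᶜ isClosed_closure hU.isClosed_compl
            (Set.disjoint_compl_right_iff_subset.mpr (key C U hC hU hCU n).2.2)
            isClosed_closure hU'.isClosed_compl
            (Set.disjoint_compl_right_iff_subset.mpr (key C' U' hC' hU' hCU' n).2.2)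
            (closure_mono ih) (Set.compl_subset_compl.mpr hUU')
    exact Set.iUnion_mono mono
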